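/- Let u, v be two linearly independent vectors in ℤ³. Then the parallelogram {su + tv : 0 ≤ s, t ≤ 1} contains no point of ℤ³ other than its four vertices 0, u, v, u+v if and only if the greatest common divisor of the three coordinates of the cross product u × v equals 1. -/

import Mathlib

open Matrix

/-- A point of `ℝ³` is a lattice point if all of its coordinates are integers. -/
def IsLatticePt (x : Fin 3 → ℝ) : Prop := ∀ i, ∃ m : ℤ, x i = (m : ℝ)

lemma cross_cast {R : Type*} [CommRing R] (f : ℤ →+* R) (a b : Fin 3 → ℤ) :
    (fun i => f (crossProduct a b i)) = crossProduct (fun i => f (a i)) (fun i => f (b i)) := by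
  funext i
  fin_cases i <;> simp [cross_apply]

/-- For linearly independent `u, v ∈ ℤ³`, the parallelogram `{su + tv : 0 ≤ s, t ≤ 1}`
contains no point of `ℤ³` other than its four vertices `0, u, v, u + v` if and only if the
gcd of the three coordinates of the cross product `u × v` equals `1`. -/
theorem stmt_8 (u v : Fin 3 → ℤ)
    (hli : LinearIndependent ℝ ![(fun i => (u i : ℝ)), (fun i => (v i : ℝ))]) :
    (∀ x : Fin 3 → ℝ,
        (∃ s t : ℝ, 0 ≤ s ∧ s ≤ 1 ∧ 0 ≤ t ∧ t ≤ 1 ∧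
          x = s • (fun i => (u i : ℝ)) + t • (fun i => (v i : ℝ))) →
        IsLatticePt x →
        x = 0 ∨ x = (fun i => (u i : ℝ)) ∨ x = (fun i => (v i : ℝ)) ∨
          x = (fun i => (u i : ℝ)) + (fun i => (v i : ℝ))) ↔
      Int.gcd (crossProduct u v 0) (Int.gcd (crossProduct u v 1) (crossProduct u v 2)) = 1 := by
  set U : Fin 3 → ℝ := fun i => (u i : ℝ) with hUdef
  set V : Fin 3 → ℝ := fun i => (v i : ℝ) with hVdef
  have hzero : ∀ a b : ℝ, a • U + b • V = 0 → a = 0 ∧ b = 0 :=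
    LinearIndependent.pair_iff.mp hli
  have huniq : ∀ s t s' t' : ℝ, s • U + t • V = s' • U + t' • V → s = s' ∧ t = t' := by
    intro s t s' t' hst
    have h0 : (s - s') • U + (t - t') • V = 0 := by
      rw [sub_smul, sub_smul, sub_add_sub_comm, hst, sub_self]
    obtain ⟨h1, h2⟩ := hzero _ _ h0
    constructor <;> [linarith [sub_eq_zero.mp (by linarith : s - s' = 0)];
      linarith [sub_eq_zero.mp (by linarith : t - t' = 0)]]
  constructor
  · -- only vertices ⇒ gcd = 1
    intro h
    by_contra hne
    obtain ⟨p, hp, hpd⟩ := Nat.exists_prime_and_dvd hne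
    haveI : Fact p.Prime := ⟨hp⟩
    haveI : NeZero p := ⟨hp.ne_zero⟩
    have hp2 : (2 : ℝ) ≤ (p : ℝ) := by exact_mod_cast hp.two_le
    have hppos : (0 : ℝ) < (p : ℝ) := by linarith
    -- basic helper: classify coefficients of a lattice point in the parallelogram
    have hUV : ∀ s t : ℝ, 0 ≤ s → s ≤ 1 → 0 ≤ t → t ≤ 1 →
        IsLatticePt (s • U + t • V) → (s = 0 ∨ s = 1) ∧ (t = 0 ∨ t = 1) := by
      intro s t hs0 hs1 ht0 ht1 hlat
      rcases h _ ⟨s, t, hs0, hs1, ht0, ht1, rfl⟩ hlat with hc | hc | hc | hc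
      · obtain ⟨e1, e2⟩ := huniq s t 0 0 (by simpa using hc)
        exact ⟨Or.inl e1, Or.inl e2⟩
      · obtain ⟨e1, e2⟩ := huniq s t 1 0 (by simpa using hc)
        exact ⟨Or.inr e1, Or.inl e2⟩
      · obtain ⟨e1, e2⟩ := huniq s t 0 1 (by simpa using hc)
        exact ⟨Or.inl e1, Or.inr e2⟩
      · obtain ⟨e1, e2⟩ := huniq s t 1 1 (by simpa using hc)
        exact ⟨Or.inr e1, Or.inr e2⟩
    -- p divides every coordinate of the cross product
    have hpw : ∀ i, (p : ℤ) ∣ crossProduct u v i := by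
      have hd0 : ((Int.gcd (crossProduct u v 0)
          (Int.gcd (crossProduct u v 1) (crossProduct u v 2)) : ℤ)) ∣ crossProduct u v 0 :=
        Int.gcd_dvd_left _ _
      have hd12 : ((Int.gcd (crossProduct u v 0)
          (Int.gcd (crossProduct u v 1) (crossProduct u v 2)) : ℤ)) ∣
          ((Int.gcd (crossProduct u v 1) (crossProduct u v 2) : ℤ)) :=
        Int.gcd_dvd_right _ _
      have hpz : (p : ℤ) ∣ ((Int.gcd (crossProduct u v 0)
          (Int.gcd (crossProduct u v 1) (crossProduct u v 2)) : ℤ)) := by exact_mod_cast hpd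
      intro i
      fin_cases i
      · exact hpz.trans hd0
      · exact hpz.trans (hd12.trans (Int.gcd_dvd_left _ _))
      · exact hpz.trans (hd12.trans (Int.gcd_dvd_right _ _))
    -- reduce mod p
    set ub : Fin 3 → ZMod p := fun i => ((u i : ZMod p)) with hub
    set vb : Fin 3 → ZMod p := fun i => ((v i : ZMod p)) with hvb
    have hcrossb : crossProduct ub vb = 0 := by
      funext i
      have h0 := (ZMod.intCast_zmod_eq_zero_iff_dvd (crossProduct u v i) p).mpr (hpw i)
      rw [cross_apply] at h0
      rw [hub, hvb, cross_apply]
      fin_cases i <;> simp at h0 ⊢ <;> push_cast at h0 <;> linear_combination h0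
    have hdep : ¬ LinearIndependent (ZMod p) ![ub, vb] := by
      intro hind
      exact (crossProduct_ne_zero_iff_linearIndependent.mpr hind) hcrossb
    rw [LinearIndependent.pair_iff] at hdep
    push_neg at hdep
    obtain ⟨a, b, hab, habne⟩ := hdep
    by_cases hb : b = 0
    · -- then a ≠ 0 and ub = 0, i.e. p ∣ u i for all i
      have ha : a ≠ 0 := by rintro rfl; exact (habne rfl) hb
      have hub0 : ∀ i, (p : ℤ) ∣ u i := by
        intro i
        have : a • ub + b • vb = a • ub := by rw [hb, zero_smul, add_zero]
        rw [this] at hab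
        have := congrFun hab i
        simp only [Pi.smul_apply, Pi.zero_apply, smul_eq_mul] at this
        have : ub i = 0 := by
          rcases mul_eq_zero.mp this with h' | h'
          · exact absurd h' ha
          · exact h'
        exact (ZMod.intCast_zmod_eq_zero_iff_dvd _ p).mp this
      have hlat : IsLatticePt ((1 / (p : ℝ)) • U + (0 : ℝ) • V) := by
        intro i
        obtain ⟨c, hc⟩ := hub0 i
        refine ⟨c, ?_⟩
        simp only [Pi.add_apply, Pi.smul_apply, smul_eq_mul, zero_mul, add_zero, hUdef]
        rw [hc]
        push_cast
        field_simp
      obtain ⟨hs, _⟩ := hUV (1 / (p : ℝ)) 0 (by positivity) (by rw [div_le_one hppos]; linarith)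
        le_rfl zero_le_one hlat
      rcases hs with hs | hs
      · have : (1 : ℝ) = 0 := by field_simp at hs; simp at hs
        norm_num at this
      · have : (p : ℝ) = 1 := by field_simp at hs; linarith
        linarith
    · -- vb = c • ub with c = -a/b
      set c : ZMod p := -a / b with hc
      have hvc : ∀ i, vb i = c * ub i := by
        intro i
        have := congrFun hab i
        simp only [Pi.smul_apply, Pi.add_apply, Pi.zero_apply, smul_eq_mul] at this
        rw [hc, eq_comm, div_mul_eq_mul_div, div_eq_iff hb]
        linear_combination -this
      set lam : ℤ := (c.val : ℤ) with hlam
      have hlam0 : 0 ≤ lam := Int.natCast_nonneg _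
      have hlamp : lam < (p : ℤ) := by rw [hlam]; exact_mod_cast c.val_lt
      have hdvd : ∀ i, (p : ℤ) ∣ (v i - lam * u i) := by
        intro i
        rw [← ZMod.intCast_zmod_eq_zero_iff_dvd]
        push_cast
        have hlc : ((lam : ℤ) : ZMod p) = c := by
          rw [hlam]
          push_cast
          exact ZMod.natCast_rightInverse c
        rw [hlc]
        have := hvc i
        rw [hub, hvb] at this
        simp only at this
        linear_combination this
      set s₀ : ℝ := ((p : ℝ) - (lam : ℝ)) / (p : ℝ) with hs₀
      set t₀ : ℝ := 1 / (p : ℝ) with ht₀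
      have hlamR : (lam : ℝ) < (p : ℝ) := by exact_mod_cast hlamp
      have hlamR0 : (0 : ℝ) ≤ (lam : ℝ) := by exact_mod_cast hlam0
      have hlat : IsLatticePt (s₀ • U + t₀ • V) := by
        intro i
        obtain ⟨d, hd⟩ := hdvd i
        refine ⟨u i + d, ?_⟩
        simp only [Pi.add_apply, Pi.smul_apply, smul_eq_mul, hUdef, hVdef, hs₀, ht₀]
        have hvi : (v i : ℝ) = (p : ℝ) * (d : ℝ) + (lam : ℝ) * (u i : ℝ) := by
          have : v i = p * d + lam * u i := by linarith [hd]
          exact_mod_cast congrArg (Int.cast : ℤ → ℝ) this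
        push_cast
        field_simp
        linear_combination hvi
      obtain ⟨_, ht⟩ := hUV s₀ t₀
        (by rw [hs₀]; exact div_nonneg (by linarith) (le_of_lt hppos))
        (by rw [hs₀, div_le_one hppos]; linarith)
        (by rw [ht₀]; positivity)
        (by rw [ht₀, div_le_one hppos]; linarith) hlat
      rcases ht with ht | ht
      · have : (1 : ℝ) = 0 := by rw [ht₀] at ht; field_simp at ht; simp at ht
        norm_num at this
      · have : (p : ℝ) = 1 := by rw [ht₀] at ht; field_simp at ht; linarith
        linarith
  · -- gcd = 1 ⇒ only vertices
    intro hg x hx hlat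
    obtain ⟨s, t, hs0, hs1, ht0, ht1, hxst⟩ := hx
    choose m hm using hlat
    have hcoord : ∀ j, s * (u j : ℝ) + t * (v j : ℝ) = (m j : ℝ) := by
      intro j
      have := congrFun hxst j
      simp only [Pi.add_apply, Pi.smul_apply, smul_eq_mul, hUdef, hVdef] at this
      rw [← this]
      exact hm j
    -- Bezout coefficients
    obtain ⟨a, b, cc, habc⟩ : ∃ a b cc : ℤ,
        a * crossProduct u v 0 + b * crossProduct u v 1 + cc * crossProduct u v 2 = 1 := by
      set w0 := crossProduct u v 0
      set w1 := crossProduct u v 1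
      set w2 := crossProduct u v 2
      have e1 := Int.gcd_eq_gcd_ab w0 ((Int.gcd w1 w2 : ℤ))
      have e2 := Int.gcd_eq_gcd_ab w1 w2
      rw [hg] at e1
      refine ⟨Int.gcdA w0 ((Int.gcd w1 w2 : ℤ)),
        Int.gcdA w1 w2 * Int.gcdB w0 ((Int.gcd w1 w2 : ℤ)),
        Int.gcdB w1 w2 * Int.gcdB w0 ((Int.gcd w1 w2 : ℤ)), ?_⟩
      push_cast at e1
      linear_combination -e1 - Int.gcdB w0 ((Int.gcd w1 w2 : ℤ)) * e2
    have habcR : (a : ℝ) * (crossProduct u v 0 : ℝ) + (b : ℝ) * (crossProduct u v 1 : ℝ)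
        + (cc : ℝ) * (crossProduct u v 2 : ℝ) = 1 := by exact_mod_cast congrArg (Int.cast : ℤ → ℝ) habc
    have hsw : ∀ i, s * (crossProduct u v i : ℝ) = (crossProduct m v i : ℝ) := by
      intro i
      fin_cases i
      · simp [cross_apply]; push_cast
        linear_combination (v 2 : ℝ) * hcoord 1 - (v 1 : ℝ) * hcoord 2
      · simp [cross_apply]; push_cast
        linear_combination (v 0 : ℝ) * hcoord 2 - (v 2 : ℝ) * hcoord 0
      · simp [cross_apply]; push_cast
        linear_combination (v 1 : ℝ) * hcoord 0 - (v 0 : ℝ) * hcoord 1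
    have htw : ∀ i, t * (crossProduct u v i : ℝ) = (crossProduct u m i : ℝ) := by
      intro i
      fin_cases i
      · simp [cross_apply]; push_cast
        linear_combination (u 1 : ℝ) * hcoord 2 - (u 2 : ℝ) * hcoord 1
      · simp [cross_apply]; push_cast
        linear_combination (u 2 : ℝ) * hcoord 0 - (u 0 : ℝ) * hcoord 2
      · simp [cross_apply]; push_cast
        linear_combination (u 0 : ℝ) * hcoord 1 - (u 1 : ℝ) * hcoord 0
    have hsint : s = ((a * crossProduct m v 0 + b * crossProduct m v 1
        + cc * crossProduct m v 2 : ℤ) : ℝ) := by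
      push_cast
      linear_combination -s * habcR + (a : ℝ) * hsw 0 + (b : ℝ) * hsw 1 + (cc : ℝ) * hsw 2
    have htint : t = ((a * crossProduct u m 0 + b * crossProduct u m 1
        + cc * crossProduct u m 2 : ℤ) : ℝ) := by
      push_cast
      linear_combination -t * habcR + (a : ℝ) * htw 0 + (b : ℝ) * htw 1 + (cc : ℝ) * htw 2
    set ns : ℤ := a * crossProduct m v 0 + b * crossProduct m v 1 + cc * crossProduct m v 2
    set nt : ℤ := a * crossProduct u m 0 + b * crossProduct u m 1 + cc * crossProduct u m 2
    have hns : ns = 0 ∨ ns = 1 := by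
      have h1 : (0 : ℝ) ≤ (ns : ℝ) := by rw [← hsint]; exact hs0
      have h2 : (ns : ℝ) ≤ 1 := by rw [← hsint]; exact hs1
      have h1' : (0 : ℤ) ≤ ns := by exact_mod_cast h1
      have h2' : ns ≤ 1 := by exact_mod_cast h2
      omega
    have hnt : nt = 0 ∨ nt = 1 := by
      have h1 : (0 : ℝ) ≤ (nt : ℝ) := by rw [← htint]; exact ht0
      have h2 : (nt : ℝ) ≤ 1 := by rw [← htint]; exact ht1
      have h1' : (0 : ℤ) ≤ nt := by exact_mod_cast h1
      have h2' : nt ≤ 1 := by exact_mod_cast h2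
      omega
    rcases hns with hns | hns <;> rcases hnt with hnt | hnt <;>
      rw [hns] at hsint <;> rw [hnt] at htint <;>
      simp only [Int.cast_zero, Int.cast_one] at hsint htint <;>
      rw [hsint, htint] at hxst
    · left; rw [hxst]; simp
    · right; right; left; rw [hxst]; simp
    · right; left; rw [hxst]; simp
    · right; right; right; rw [hxst]; simp
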